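/- For every integer p ≥ 3, the equation p(1−q)·log(1−q) + p·q − (p−1)·q² = 0 has exactly one solution q in the open interval (0,1). -/

import Mathlib

open Real Set

/-- ψ(q) = log(1-q) + (1-q)⁻¹ - 1 > 0 on (0,1). -/
private lemma aux_psi_pos {q : ℝ} (hq : q ∈ Set.Ioo (0:ℝ) 1) :
    0 < Real.log (1 - q) + (1 - q)⁻¹ - 1 := by
  have h1 : 0 < 1 - q := by linarith [hq.2]
  have h2 : (1 - q)⁻¹ ≠ 1 := by
    intro h
    have : (1:ℝ) - q = 1 := by
      field_simp at h
      linarith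
    linarith [hq.1]
  have := Real.log_lt_sub_one_of_pos (inv_pos.mpr h1) h2
  rw [Real.log_inv] at this
  linarith

private lemma aux_phi_hasDeriv {q : ℝ} (h1 : 0 < 1 - q) :
    HasDerivAt (fun x : ℝ => (x - 2) * Real.log (1 - x) - 2 * x)
      (Real.log (1 - q) + (1 - q)⁻¹ - 1) q := by
  have hg : HasDerivAt (fun x : ℝ => 1 - x) (-1) q := by
    simpa using (hasDerivAt_id' q).const_sub (1:ℝ)
  have hlog : HasDerivAt (fun x : ℝ => Real.log (1 - x)) ((1 - q)⁻¹ * -1) q :=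
    (Real.hasDerivAt_log h1.ne').comp q hg
  have h : HasDerivAt (fun x : ℝ => (x - 2) * Real.log (1 - x) - 2 * x) _ q := (((hasDerivAt_id q).sub_const 2).mul hlog).sub ((hasDerivAt_id q).const_mul 2)
  convert h using 1
  have hne : (1 : ℝ) - q ≠ 0 := h1.ne'
  simp only [id_eq]
  field_simp
  ring

/-- φ(q) = (q-2)log(1-q) - 2q > 0 on (0,1). -/
private lemma aux_phi_pos {q : ℝ} (hq : q ∈ Set.Ioo (0:ℝ) 1) :
    0 < (q - 2) * Real.log (1 - q) - 2 * q := by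
  have hmono : StrictMonoOn (fun x : ℝ => (x - 2) * Real.log (1 - x) - 2 * x)
      (Set.Ico (0:ℝ) 1) := by
    apply strictMonoOn_of_deriv_pos (convex_Ico 0 1)
    · apply ContinuousOn.sub
      · apply ContinuousOn.mul
        · exact (continuous_id.sub continuous_const).continuousOn
        · apply ContinuousOn.log
          · exact (continuous_const.sub continuous_id).continuousOn
          · intro x hx
            have : (0:ℝ) < 1 - x := by
              rcases hx with ⟨_, hx2⟩
              linarith
            exact this.ne'
      · exact (continuous_const.mul continuous_id).continuousOn
    · intro x hx
      rw [interior_Ico] at hx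
      have h1 : 0 < 1 - x := by linarith [hx.2]
      rw [(aux_phi_hasDeriv h1).deriv]
      exact aux_psi_pos hx
  have h0 : (0:ℝ) ∈ Set.Ico (0:ℝ) 1 := ⟨le_refl 0, one_pos⟩
  have hq' : q ∈ Set.Ico (0:ℝ) 1 := ⟨hq.1.le, hq.2⟩
  have := hmono h0 hq' hq.1
  simpa using this

/-- w(q) = ((1-q)log(1-q)+q)/q² is strictly monotone on (0,1). -/
private lemma aux_w_strictMono :
    StrictMonoOn (fun q : ℝ => ((1 - q) * Real.log (1 - q) + q) / q ^ 2)
      (Set.Ioo (0:ℝ) 1) := by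
  apply strictMonoOn_of_deriv_pos (convex_Ioo 0 1)
  · apply ContinuousOn.div
    · apply ContinuousOn.add
      · apply ContinuousOn.mul
        · exact (continuous_const.sub continuous_id).continuousOn
        · apply ContinuousOn.log
          · exact (continuous_const.sub continuous_id).continuousOn
          · intro x hx
            have : (0:ℝ) < 1 - x := by linarith [hx.2]
            exact this.ne'
      · exact continuousOn_id
    · exact (continuous_pow 2).continuousOn
    · intro x hx
      exact pow_ne_zero 2 (ne_of_gt hx.1)
  · intro x hx
    rw [interior_Ioo] at hx
    have hx0 : 0 < x := hx.1
    have h1 : 0 < 1 - x := by linarith [hx.2]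
    -- derivative of numerator A(q) = (1-q)log(1-q)+q is -log(1-q)
    have hg : HasDerivAt (fun y : ℝ => 1 - y) (-1) x := by
      simpa using (hasDerivAt_id' x).const_sub (1:ℝ)
    have hlog : HasDerivAt (fun y : ℝ => Real.log (1 - y)) ((1 - x)⁻¹ * -1) x :=
      (Real.hasDerivAt_log h1.ne').comp x hg
    have hA : HasDerivAt (fun y : ℝ => (1 - y) * Real.log (1 - y) + y)
        (-Real.log (1 - x)) x := by
      have h : HasDerivAt (fun y : ℝ => (1 - y) * Real.log (1 - y) + y) _ x := (hg.mul hlog).add (hasDerivAt_id x)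
      convert h using 1
      field_simp
      ring
    have hden : HasDerivAt (fun y : ℝ => y ^ 2) (2 * x) x := by
      simpa using hasDerivAt_pow 2 x
    have hw := hA.div hden (pow_ne_zero 2 hx0.ne')
    have hw' : HasDerivAt (fun q : ℝ => ((1 - q) * Real.log (1 - q) + q) / q ^ 2) _ x := hw
    rw [hw'.deriv]
    apply div_pos
    · have hphi := aux_phi_pos hx
      nlinarith [hphi, hx0]
    · positivity

theorem stmt0 (p : ℕ) (hp : 3 ≤ p) :
    ∃! q : ℝ, q ∈ Set.Ioo (0:ℝ) 1 ∧
      (p : ℝ) * (1 - q) * Real.log (1 - q) + (p : ℝ) * q - ((p : ℝ) - 1) * q ^ 2 = 0 := by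
  have hp3 : (3:ℝ) ≤ (p:ℝ) := by exact_mod_cast hp
  have hp0 : (0:ℝ) < (p:ℝ) := by linarith
  set f : ℝ → ℝ := fun q =>
    (p : ℝ) * (1 - q) * Real.log (1 - q) + (p : ℝ) * q - ((p : ℝ) - 1) * q ^ 2 with hf
  -- continuity of f
  have hcont : Continuous f := by
    have h1 : Continuous fun q : ℝ => (1 - q) * Real.log (1 - q) :=
      Real.continuous_mul_log.comp (continuous_const.sub continuous_id)
    have : f = fun q => (p : ℝ) * ((1 - q) * Real.log (1 - q)) + (p : ℝ) * q
        - ((p : ℝ) - 1) * q ^ 2 := by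
      funext q
      rw [hf]
      ring
    rw [this]
    continuity
  -- f(1/2) < 0
  have hhalf : f (1/2) < 0 := by
    have hlog2 : Real.log (1 - (1/2 : ℝ)) = -Real.log 2 := by
      rw [show (1:ℝ) - 1/2 = 2⁻¹ by norm_num, Real.log_inv]
    simp only [hf]
    rw [hlog2]
    nlinarith [Real.log_two_gt_d9, hp3]
  -- f(1) = 1
  have hone : f 1 = 1 := by
    simp only [hf]
    norm_num
  -- existence via IVT
  have hIVT := intermediate_value_Ioo (by norm_num : (1/2 : ℝ) ≤ 1) hcont.continuousOn
  have h0mem : (0:ℝ) ∈ Set.Ioo (f (1/2)) (f 1) := by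
    rw [hone]
    exact ⟨hhalf, one_pos⟩
  obtain ⟨c, hc, hfc⟩ := hIVT h0mem
  have hcIoo : c ∈ Set.Ioo (0:ℝ) 1 := ⟨by linarith [hc.1], hc.2⟩
  -- key: roots of f determine w value
  have hkey : ∀ q : ℝ, q ∈ Set.Ioo (0:ℝ) 1 → f q = 0 →
      ((1 - q) * Real.log (1 - q) + q) / q ^ 2 = ((p:ℝ) - 1) / (p:ℝ) := by
    intro q hq hfq
    have hq0 : q ≠ 0 := ne_of_gt hq.1
    simp only [hf] at hfq
    field_simp
    nlinarith [hfq]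
  refine ⟨c, ⟨hcIoo, hfc⟩, ?_⟩
  rintro y ⟨hy, hfy⟩
  have h1 := hkey y hy hfy
  have h2 := hkey c hcIoo hfc
  exact aux_w_strictMono.injOn hy hcIoo (by rw [h1, h2])
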